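/- Let P be a training set in EuclideanSpace ℝ (Fin d). Let κ be the number of points of P that are a nearest enemy of some point of P, and let k be the number of border points of P. Then κ ≤ k. -/
import Mathlib

/-- The nearest-enemy distance of `p`: the minimum of `‖p - q‖` over enemies `q` of `p`. -/
noncomputable def dne {d : ℕ} {Λ : Type*} (P : Finset (EuclideanSpace ℝ (Fin d)))
    (l : EuclideanSpace ℝ (Fin d) → Λ) (p : EuclideanSpace ℝ (Fin d)) : ℝ :=
  sInf {r : ℝ | ∃ q ∈ P, l q ≠ l p ∧ r = ‖p - q‖}

/-- `q` is a nearest enemy of `p` in `P`: an enemy of `p` at minimum distance. -/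
def IsNearestEnemy {d : ℕ} {Λ : Type*} (P : Finset (EuclideanSpace ℝ (Fin d)))
    (l : EuclideanSpace ℝ (Fin d) → Λ) (p q : EuclideanSpace ℝ (Fin d)) : Prop :=
  q ∈ P ∧ l q ≠ l p ∧ ∀ q' ∈ P, l q' ≠ l p → ‖p - q‖ ≤ ‖p - q'‖

/-- `p` is a border point of `P`: it lies, together with some enemy `q`, on the boundary of
a ball containing no point of `P` in its interior. -/
def IsBorder {d : ℕ} {Λ : Type*} (P : Finset (EuclideanSpace ℝ (Fin d)))
    (l : EuclideanSpace ℝ (Fin d) → Λ) (p : EuclideanSpace ℝ (Fin d)) : Prop :=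
  ∃ q ∈ P, l q ≠ l p ∧ ∃ (z : EuclideanSpace ℝ (Fin d)) (ρ : ℝ), 0 < ρ ∧
    ‖z - p‖ = ρ ∧ ‖z - q‖ = ρ ∧ ∀ x ∈ P, ρ ≤ ‖z - x‖

lemma isBorder_of_nearestEnemy {d : ℕ} {Λ : Type*}
    (P : Finset (EuclideanSpace ℝ (Fin d))) (l : EuclideanSpace ℝ (Fin d) → Λ)
    {p q : EuclideanSpace ℝ (Fin d)} (hp : p ∈ P) (h : IsNearestEnemy P l p q) :
    IsBorder P l q := by
  classical
  obtain ⟨hq, hlq, hmin⟩ := h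
  have hpq : p ≠ q := fun e => hlq (e ▸ rfl)
  set δ : ℝ := ‖p - q‖ with hδ
  have hδ0 : 0 < δ := by
    simpa [hδ, sub_eq_zero] using (norm_pos_iff.2 (sub_ne_zero.2 hpq))
  -- same-labeled (as p) points
  set S : Finset (EuclideanSpace ℝ (Fin d)) := P.filter (fun x => l x = l p) with hS
  have hSne : S.Nonempty := ⟨p, by simp [hS, hp]⟩
  set z : ℝ → EuclideanSpace ℝ (Fin d) := fun s => q + s • (p - q) with hz
  set g : ℝ → ℝ := fun s => S.inf' hSne (fun x => ‖z s - x‖ - s * δ) with hg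
  have hgc : Continuous g := by
    apply Continuous.finset_inf'_apply
    intro x hx
    have h1 : Continuous fun s : ℝ => ‖z s - x‖ := by
      apply Continuous.norm
      apply Continuous.sub _ continuous_const
      exact continuous_const.add ((continuous_id.smul continuous_const))
    exact h1.sub (continuous_id.mul continuous_const)
  have hg0 : 0 < g 0 := by
    rw [hg]
    rw [Finset.lt_inf'_iff]
    intro x hx
    simp only [hS, Finset.mem_filter] at hx
    have hxq : x ≠ q := fun e => hlq (hx.2 ▸ e ▸ rfl)
    have : (0:ℝ) < ‖z 0 - x‖ := by
      simp only [hz, zero_smul, add_zero]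
      exact norm_pos_iff.2 (sub_ne_zero.2 (Ne.symm hxq))
    simpa using this
  have hg1 : g 1 ≤ 0 := by
    have hpS : p ∈ S := by simp [hS, hp]
    have : g 1 ≤ ‖z 1 - p‖ - 1 * δ := Finset.inf'_le _ hpS
    have hz1 : z 1 - p = 0 := by simp [hz]
    rw [hz1, norm_zero] at this
    linarith
  -- IVT
  have hmem : (0:ℝ) ∈ Set.Icc (g 1) (g 0) := ⟨hg1, le_of_lt hg0⟩
  have := intermediate_value_Icc' (by norm_num : (0:ℝ) ≤ 1) hgc.continuousOn hmem
  obtain ⟨s, hsI, hgs⟩ := this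
  have hs0 : 0 < s := by
    rcases lt_or_eq_of_le hsI.1 with h | h
    · exact h
    · exfalso; rw [← h] at hgs; exact absurd hgs (ne_of_gt hg0)
  have hρ0 : 0 < s * δ := mul_pos hs0 hδ0
  -- the touching point
  obtain ⟨x, hxS, hxeq⟩ := Finset.exists_mem_eq_inf' hSne (fun x => ‖z s - x‖ - s * δ)
  have hxeq0 : ‖z s - x‖ - s * δ = 0 := by
    have hgs' : S.inf' hSne (fun x => ‖z s - x‖ - s * δ) = 0 := hgs
    rw [← hxeq]; exact hgs'
  simp only [hS, Finset.mem_filter] at hxS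
  refine ⟨x, hxS.1, fun e => hlq (hxS.2 ▸ e.symm), z s, s * δ, hρ0, ?_, ?_, ?_⟩
  · -- ‖z s - q‖ = s * δ
    have : z s - q = s • (p - q) := by simp [hz]
    rw [this, norm_smul]
    simp [abs_of_pos hs0, hδ]
  · -- ‖z s - x‖ = s * δ
    linarith
  · intro y hy
    by_cases hly : l y = l p
    · have hyS : y ∈ S := by simp [hS, hy, hly]
      have h2 : S.inf' hSne (fun x => ‖z s - x‖ - s * δ) ≤ ‖z s - y‖ - s * δ :=
        Finset.inf'_le _ hyS
      have hgs' : S.inf' hSne (fun x => ‖z s - x‖ - s * δ) = 0 := hgs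
      rw [hgs'] at h2; linarith
    · -- enemy of p: use nearest-enemy minimality
      have hmy : δ ≤ ‖p - y‖ := hmin y hy hly
      have hpz : ‖p - z s‖ = (1 - s) * δ := by
        have : p - z s = (1 - s) • (p - q) := by
          simp only [hz]
          module
        rw [this, norm_smul]
        have h1s : 0 ≤ 1 - s := by linarith [hsI.2]
        simp [abs_of_nonneg h1s, hδ]
      have htri : ‖p - y‖ ≤ ‖p - z s‖ + ‖z s - y‖ := norm_sub_le_norm_sub_add_norm_sub p (z s) y
      rw [hpz] at htri
      nlinarith

/-- The number `κ` of nearest-enemy points of `P` is at most the number `k` of border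
points of `P`. -/
theorem kappa_le_k {d : ℕ} {Λ : Type*}
    (P : Finset (EuclideanSpace ℝ (Fin d))) (l : EuclideanSpace ℝ (Fin d) → Λ)
    (hP : ∀ p ∈ P, ∃ q ∈ P, l q ≠ l p) :
    {q : EuclideanSpace ℝ (Fin d) | q ∈ P ∧ ∃ p ∈ P, IsNearestEnemy P l p q}.ncard ≤
      {q : EuclideanSpace ℝ (Fin d) | q ∈ P ∧ IsBorder P l q}.ncard := by
  apply Set.ncard_le_ncard
  · rintro q ⟨hq, p, hp, hne⟩
    exact ⟨hq, isBorder_of_nearestEnemy P l hp hne⟩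
  · exact (P.finite_toSet).subset (fun q hq => hq.1)
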